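/- Let μ be a finite positive Borel measure on the unit circle T with infinite support, K_n its Christoffel kernel, w ∈ T, and ζ_{0n}, …, ζ_{nn} ∈ T the zeros of the para-orthogonal polynomial B_{n+1}(w,·). Define the discrete measure μ_n := Σ_{j=0}^n (1/K_n(ζ_{jn}, ζ_{jn})) δ_{ζ_{jn}}, where δ_ζ is the Dirac measure at ζ. Then for all polynomials p, q of degree at most n, ∫ p conj(q) dμ_n = ∫ p conj(q) dμ. -/

import Mathlib

open MeasureTheory Polynomial Filter
open scoped ComplexConjugate Topology

/-- The Christoffel kernel `K_n(w,z) = ∑_{j=0}^n conj(φ_j(w)) φ_j(z)`. -/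
noncomputable def christoffelK (φ : ℕ → Polynomial ℂ) (n : ℕ) (w z : ℂ) : ℂ :=
  ∑ j ∈ Finset.range (n + 1), conj ((φ j).eval w) * (φ j).eval z

/-- The para-orthogonal polynomial `B_{n+1}(w,z) = (1 − conj(w) z) K_n(w,z)`. -/
noncomputable def paraOrtho (φ : ℕ → Polynomial ℂ) (n : ℕ) (w z : ℂ) : ℂ :=
  (1 - conj w * z) * christoffelK φ n w z

/-- The discrete measure `μ_n = ∑_{j=0}^n (1/K_n(ζ_j,ζ_j)) δ_{ζ_j}`
(recall `K_n(ζ,ζ) = ∑_k |φ_k(ζ)|²` is a positive real number for `ζ ∈ T`). -/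
noncomputable def nodeMeasure (φ : ℕ → Polynomial ℂ) (n : ℕ) (ζ : Fin (n + 1) → ℂ) :
    Measure ℂ :=
  ∑ j : Fin (n + 1),
    ENNReal.ofReal (((christoffelK φ n (ζ j) (ζ j)).re)⁻¹) • Measure.dirac (ζ j)


-- integrability helper
lemma integrable_dirac'' {f : ℂ → ℂ} (hf : Measurable f) (a : ℂ) : Integrable f (Measure.dirac a) := by
  refine ⟨hf.aestronglyMeasurable, ?_⟩
  rw [HasFiniteIntegral, lintegral_dirac]
  exact ENNReal.coe_lt_top

lemma ae_circle {μ : Measure ℂ} (hμT : μ (Metric.sphere (0 : ℂ) 1)ᶜ = 0) :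
    ∀ᵐ z ∂μ, ‖z‖ = 1 := by
  have : ∀ᵐ z ∂μ, z ∈ Metric.sphere (0:ℂ) 1 := by
    rw [MeasureTheory.ae_iff]
    exact hμT
  filter_upwards [this] with z hz
  simpa [mem_sphere_zero_iff_norm] using hz

lemma integrable_PQ {μ : Measure ℂ} [IsFiniteMeasure μ]
    (hμT : μ (Metric.sphere (0 : ℂ) 1)ᶜ = 0) (P Q : Polynomial ℂ) :
    Integrable (fun z => P.eval z * conj (Q.eval z)) μ := by
  have hc : Continuous (fun z => P.eval z * conj (Q.eval z)) := by
    continuity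
  obtain ⟨x0, _, hx0⟩ := (isCompact_sphere (0:ℂ) 1).exists_isMaxOn
    ⟨1, by simp⟩ (hc.norm.continuousOn)
  refine (integrable_const (‖P.eval x0 * conj (Q.eval x0)‖)).mono'
    hc.aestronglyMeasurable ?_
  filter_upwards [ae_circle hμT] with z hz
  exact hx0 (by simpa [mem_sphere_zero_iff_norm] using hz)


noncomputable def Kpoly (φ : ℕ → Polynomial ℂ) (n : ℕ) (a : ℂ) : Polynomial ℂ :=
  ∑ k ∈ Finset.range (n + 1), Polynomial.C (conj ((φ k).eval a)) * φ k

lemma Kpoly_eval (φ : ℕ → Polynomial ℂ) (n : ℕ) (a z : ℂ) :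
    (Kpoly φ n a).eval z = christoffelK φ n a z := by
  simp [Kpoly, christoffelK, eval_finset_sum]

lemma Kpoly_degree (φ : ℕ → Polynomial ℂ) (hdeg : ∀ k, (φ k).degree = (k : ℕ))
    (n : ℕ) (a : ℂ) : (Kpoly φ n a).degree ≤ (n : ℕ) := by
  refine (Polynomial.degree_sum_le _ _).trans ?_
  rw [Finset.sup_le_iff]
  intro k hk
  refine (Polynomial.degree_mul_le _ _).trans ?_
  calc (Polynomial.C (conj ((φ k).eval a))).degree + (φ k).degree ≤ 0 + (φ k).degree := by
        gcongr; exact Polynomial.degree_C_le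
    _ = (k : ℕ) := by rw [zero_add, hdeg k]
    _ ≤ (n : ℕ) := by exact_mod_cast Nat.lt_succ_iff.mp (Finset.mem_range.mp hk)

lemma exists_expansion (φ : ℕ → Polynomial ℂ) (hdeg : ∀ k, (φ k).degree = (k : ℕ)) :
    ∀ (n : ℕ) (f : Polynomial ℂ), f.degree ≤ (n : ℕ) →
      ∃ c : ℕ → ℂ, f = ∑ k ∈ Finset.range (n + 1), Polynomial.C (c k) * φ k := by
  intro n
  induction n with
  | zero =>
    intro f hf
    have h0 : φ 0 = Polynomial.C ((φ 0).coeff 0) := Polynomial.eq_C_of_degree_le_zero (by simp [hdeg 0])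
    have hc0 : (φ 0).coeff 0 ≠ 0 := by
      have h := hdeg 0
      intro hz
      have : φ 0 = 0 := by rw [h0, hz, map_zero]
      rw [this] at h
      simp at h
    refine ⟨fun _ => f.coeff 0 / (φ 0).coeff 0, ?_⟩
    rw [Finset.sum_range_one]
    conv_lhs => rw [Polynomial.eq_C_of_degree_le_zero hf]
    rw [h0]
    rw [← Polynomial.C_mul]
    congr 1
    field_simp
    simp [Polynomial.coeff_C_zero, hc0]
  | succ n ih =>
    intro f hf
    set c : ℂ := f.coeff (n+1) / (φ (n+1)).coeff (n+1) with hc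
    have hφc : (φ (n+1)).coeff (n+1) ≠ 0 := by
      have := hdeg (n+1)
      intro h
      have := Polynomial.coeff_ne_zero_of_eq_degree this
      exact this h
    set f' : Polynomial ℂ := f - Polynomial.C c * φ (n+1) with hf'
    have hdf' : f'.degree ≤ (n : ℕ) := by
      refine Polynomial.degree_le_iff_coeff_zero _ _ |>.mpr ?_
      intro m hm
      have hmn : (n : ℕ) < m := by exact_mod_cast hm
      rcases Nat.lt_or_ge m (n+2) with h2 | h2
      · have hmeq : m = n + 1 := by omega
        subst hmeq
        simp only [hf', Polynomial.coeff_sub, Polynomial.coeff_C_mul]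
        rw [hc]
        field_simp
        simp
      · have h1 : f.coeff m = 0 := by
          apply Polynomial.coeff_eq_zero_of_degree_lt
          exact lt_of_le_of_lt hf (by exact_mod_cast by omega)
        have h2' : (φ (n+1)).coeff m = 0 := by
          apply Polynomial.coeff_eq_zero_of_degree_lt
          rw [hdeg (n+1)]
          exact_mod_cast by omega
        simp [hf', h1, h2']
    obtain ⟨c', hc'⟩ := ih f' hdf'
    refine ⟨Function.update c' (n+1) c, ?_⟩
    rw [Finset.sum_range_succ]
    have : ∀ k ∈ Finset.range (n+1), Polynomial.C (Function.update c' (n+1) c k) * φ k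
        = Polynomial.C (c' k) * φ k := by
      intro k hk
      rw [Function.update_of_ne (by simp at hk; omega)]
    rw [Finset.sum_congr rfl this, ← hc', Function.update_self, hf']
    ring

section Repro
variable {μ : Measure ℂ} [IsFiniteMeasure μ]
  (hμT : μ (Metric.sphere (0 : ℂ) 1)ᶜ = 0)
  (φ : ℕ → Polynomial ℂ)
  (horth : ∀ k m, ∫ z, (φ k).eval z * conj ((φ m).eval z) ∂μ = if k = m then 1 else 0)

include hμT horth in
lemma integral_f_conj_phi (n : ℕ) (c : ℕ → ℂ)
    (f : Polynomial ℂ) (hfc : f = ∑ k ∈ Finset.range (n + 1), Polynomial.C (c k) * φ k)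
    (m : ℕ) (hm : m ∈ Finset.range (n + 1)) :
    ∫ z, f.eval z * conj ((φ m).eval z) ∂μ = c m := by
  have hpt : ∀ z, f.eval z * conj ((φ m).eval z)
      = ∑ k ∈ Finset.range (n + 1), c k * ((φ k).eval z * conj ((φ m).eval z)) := by
    intro z
    rw [hfc]
    simp [eval_finset_sum, Finset.sum_mul]
    ring_nf
    simp [mul_comm, mul_assoc, mul_left_comm]
  calc ∫ z, f.eval z * conj ((φ m).eval z) ∂μ
      = ∫ z, ∑ k ∈ Finset.range (n + 1), c k * ((φ k).eval z * conj ((φ m).eval z)) ∂μ := by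
        simp only [hpt]
    _ = ∑ k ∈ Finset.range (n + 1), ∫ z, c k * ((φ k).eval z * conj ((φ m).eval z)) ∂μ := by
        refine integral_finset_sum _ (fun k _ => ?_)
        exact (integrable_PQ hμT (φ k) (φ m)).const_mul _
    _ = ∑ k ∈ Finset.range (n + 1), c k * (if k = m then 1 else 0) := by
        refine Finset.sum_congr rfl (fun k _ => ?_)
        rw [integral_const_mul, horth k m]
    _ = c m := by
        rw [Finset.sum_congr rfl (fun k _ => mul_ite (k = m) (c k) 1 0)]
        simp only [mul_one, mul_zero, Finset.sum_ite_eq' (Finset.range (n+1)) m]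
        simp [hm]

include hμT horth in
lemma reproducing (hdeg : ∀ k, (φ k).degree = (k : ℕ)) (n : ℕ)
    (f : Polynomial ℂ) (hf : f.degree ≤ (n : ℕ)) (a : ℂ) :
    ∫ z, f.eval z * conj ((Kpoly φ n a).eval z) ∂μ = f.eval a := by
  obtain ⟨c, hc⟩ := exists_expansion φ hdeg n f hf
  have hpt : ∀ z, f.eval z * conj ((Kpoly φ n a).eval z)
      = ∑ k ∈ Finset.range (n + 1), (φ k).eval a * (f.eval z * conj ((φ k).eval z)) := by
    intro z
    simp only [Kpoly, eval_finset_sum, map_sum, Polynomial.eval_mul, Polynomial.eval_C,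
      map_mul, RingHomCompTriple.comp_apply, Finset.mul_sum]
    refine Finset.sum_congr rfl (fun k _ => ?_)
    simp only [RingHom.id_apply]
    ring
  calc ∫ z, f.eval z * conj ((Kpoly φ n a).eval z) ∂μ
      = ∑ k ∈ Finset.range (n + 1), ∫ z, (φ k).eval a * (f.eval z * conj ((φ k).eval z)) ∂μ := by
        simp only [hpt]
        refine integral_finset_sum _ (fun k _ => ?_)
        exact (integrable_PQ hμT f (φ k)).const_mul _
    _ = ∑ k ∈ Finset.range (n + 1), (φ k).eval a * c k := by
        refine Finset.sum_congr rfl (fun k hk => ?_)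
        rw [integral_const_mul, integral_f_conj_phi hμT φ horth n c f hc k hk]
    _ = f.eval a := by
        rw [hc]
        simp [eval_finset_sum]
        exact Finset.sum_congr rfl (fun k _ => mul_comm _ _)
end Repro

lemma K_diag_real (φ : ℕ → Polynomial ℂ) (n : ℕ) (a : ℂ) :
    christoffelK φ n a a
      = ((∑ k ∈ Finset.range (n + 1), Complex.normSq ((φ k).eval a) : ℝ) : ℂ) := by
  rw [christoffelK]
  push_cast
  refine Finset.sum_congr rfl (fun k _ => ?_)
  rw [mul_comm, Complex.mul_conj]

lemma K_diag_pos (φ : ℕ → Polynomial ℂ) (hdeg : ∀ k, (φ k).degree = (k : ℕ))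
    (n : ℕ) (a : ℂ) :
    0 < ∑ k ∈ Finset.range (n + 1), Complex.normSq ((φ k).eval a) := by
  have h0 : φ 0 = Polynomial.C ((φ 0).coeff 0) :=
    Polynomial.eq_C_of_degree_le_zero (by simp [hdeg 0])
  have hc0 : (φ 0).coeff 0 ≠ 0 := by
    have h := hdeg 0
    intro hz
    have : φ 0 = 0 := by rw [h0, hz, map_zero]
    rw [this] at h; simp at h
  refine Finset.sum_pos' (fun k _ => Complex.normSq_nonneg _) ⟨0, by simp, ?_⟩
  have : (φ 0).eval a = (φ 0).coeff 0 := by rw [h0]; simp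
  rw [this]
  exact Complex.normSq_pos.mpr hc0

lemma conj_eq_inv {z : ℂ} (hz : ‖z‖ = 1) : conj z = z⁻¹ := by
  have hz0 : z ≠ 0 := by intro h; rw [h] at hz; simp at hz
  have : z * conj z = 1 := by
    rw [Complex.mul_conj]
    norm_cast
    rw [Complex.normSq_eq_norm_sq]
    simp [Complex.norm_def] at hz ⊢
    simp [hz]
  exact eq_inv_of_mul_eq_one_left (by rw [mul_comm] at this; exact this)

noncomputable def Bpoly (φ : ℕ → Polynomial ℂ) (n : ℕ) (w : ℂ) : Polynomial ℂ :=
  (1 - Polynomial.C (conj w) * Polynomial.X) * Kpoly φ n w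

lemma Bpoly_eval (φ : ℕ → Polynomial ℂ) (n : ℕ) (w z : ℂ) :
    (Bpoly φ n w).eval z = paraOrtho φ n w z := by
  simp [Bpoly, paraOrtho, Kpoly_eval]

lemma norm_one_ne_zero {z : ℂ} (hz : ‖z‖ = 1) : z ≠ 0 := by
  intro h; rw [h] at hz; simp at hz

lemma key_pointwise (φ : ℕ → Polynomial ℂ) (n : ℕ) (w ξ : ℂ)
    (hw : ‖w‖ = 1) (hξ : ‖ξ‖ = 1) (hB : paraOrtho φ n w ξ = 0)
    (g : Polynomial ℂ) (hg : (Polynomial.X - Polynomial.C ξ) * g = Bpoly φ n w)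
    (z : ℂ) (hz : ‖z‖ = 1) :
    (z - ξ) * conj (g.eval z)
      = -ξ * (z - w) * conj (christoffelK φ n w z) := by
  by_cases hzξ : z = ξ
  · subst hzξ
    rw [sub_self, zero_mul]
    rw [paraOrtho] at hB
    rcases mul_eq_zero.mp hB with h1 | h2
    · have hwz : z = w := by
        have h1' : conj w * z = 1 := by linear_combination -h1
        have : w * (conj w * z) = w := by rw [h1', mul_one]
        have hww : w * conj w = 1 := by
          rw [Complex.mul_conj]
          norm_cast
          rw [Complex.normSq_eq_norm_sq]
          rw [hw]
          simp [hw]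
        calc z = (w * conj w) * z := by rw [hww, one_mul]
          _ = w * (conj w * z) := by ring
          _ = w := this
      rw [hwz, sub_self, mul_zero, zero_mul]
    · rw [h2, map_zero, mul_zero]
  · have hzc : conj z = z⁻¹ := conj_eq_inv hz
    have hξc : conj ξ = ξ⁻¹ := conj_eq_inv hξ
    have hz0 : z ≠ 0 := norm_one_ne_zero hz
    have hξ0 : ξ ≠ 0 := norm_one_ne_zero hξ
    have hcz : conj (z - ξ) ≠ 0 := by
      rw [map_sub, sub_ne_zero]
      exact fun h => hzξ ((starRingEnd ℂ).injective h)
    apply mul_right_cancel₀ hcz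
    have hBe : conj (g.eval z) * conj (z - ξ) = conj ((Bpoly φ n w).eval z) := by
      rw [← map_mul]
      congr 1
      rw [← hg]
      simp [mul_comm]
    calc (z - ξ) * conj (g.eval z) * conj (z - ξ)
        = (z - ξ) * (conj (g.eval z) * conj (z - ξ)) := by ring
      _ = (z - ξ) * conj ((Bpoly φ n w).eval z) := by rw [hBe]
      _ = (z - ξ) * ((1 - w * z⁻¹) * conj (christoffelK φ n w z)) := by
          rw [Bpoly_eval, paraOrtho, map_mul]
          congr 2
          rw [map_sub, map_one, map_mul, Complex.conj_conj, hzc]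
      _ = -ξ * (z - w) * conj (christoffelK φ n w z) * conj (z - ξ) := by
          rw [map_sub, hzc, hξc]
          field_simp
          ring

section Key
variable {μ : Measure ℂ} [IsFiniteMeasure μ]
  (hμT : μ (Metric.sphere (0 : ℂ) 1)ᶜ = 0)
  (φ : ℕ → Polynomial ℂ)
  (hdeg : ∀ k, (φ k).degree = (k : ℕ))
  (horth : ∀ k m, ∫ z, (φ k).eval z * conj ((φ m).eval z) ∂μ = if k = m then 1 else 0)
  {n : ℕ} {w ξ : ℂ} (hw : ‖w‖ = 1) (hξ : ‖ξ‖ = 1)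
  (hBξ : paraOrtho φ n w ξ = 0)
  {g : Polynomial ℂ} (hg : (Polynomial.X - Polynomial.C ξ) * g = Bpoly φ n w)

include hμT hdeg horth hw hξ hBξ hg in
lemma integral_root_factor (h : Polynomial ℂ)
    (hh : ((Polynomial.X - Polynomial.C w) * h).degree ≤ (n : WithBot ℕ)) :
    ∫ z, ((Polynomial.X - Polynomial.C ξ) * h).eval z * conj (g.eval z) ∂μ = 0 := by
  have hcong : ∀ᵐ z ∂μ, ((Polynomial.X - Polynomial.C ξ) * h).eval z * conj (g.eval z)
      = -ξ * (((Polynomial.X - Polynomial.C w) * h).eval z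
          * conj ((Kpoly φ n w).eval z)) := by
    filter_upwards [ae_circle hμT] with z hz
    have := key_pointwise φ n w ξ hw hξ hBξ g hg z hz
    rw [Polynomial.eval_mul, Polynomial.eval_mul, Kpoly_eval]
    simp only [Polynomial.eval_sub, Polynomial.eval_X, Polynomial.eval_C]
    calc (z - ξ) * h.eval z * conj (g.eval z)
        = h.eval z * ((z - ξ) * conj (g.eval z)) := by ring
      _ = h.eval z * (-ξ * (z - w) * conj (christoffelK φ n w z)) := by rw [this]
      _ = -ξ * ((z - w) * h.eval z * conj (christoffelK φ n w z)) := by ring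
  rw [integral_congr_ae hcong, integral_const_mul,
    reproducing hμT φ horth hdeg n _ hh w]
  simp

include hμT hdeg horth hw hξ hBξ hg in
lemma integral_conj_g (hgd : g.degree ≤ (n : WithBot ℕ)) (f : Polynomial ℂ) (hf : f.degree ≤ (n : WithBot ℕ)) :
    ∫ z, f.eval z * conj (g.eval z) ∂μ
      = f.eval ξ * conj (g.eval ξ) / christoffelK φ n ξ ξ := by
  set Kξξ : ℂ := christoffelK φ n ξ ξ with hKd
  have hKne : Kξξ ≠ 0 := by
    rw [hKd, K_diag_real]
    exact_mod_cast (K_diag_pos φ hdeg n ξ).ne'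
  set f' : Polynomial ℂ := f - Polynomial.C (f.eval ξ / Kξξ) * Kpoly φ n ξ with hf'd
  have hf'root : f'.IsRoot ξ := by
    simp only [Polynomial.IsRoot, hf'd, Polynomial.eval_sub, Polynomial.eval_mul,
      Polynomial.eval_C, Kpoly_eval]
    rw [← hKd]
    field_simp
    simp
  obtain ⟨h, hh⟩ := (Polynomial.dvd_iff_isRoot.mpr hf'root)
  have hf'deg : f'.degree ≤ (n : WithBot ℕ) := by
    refine (Polynomial.degree_sub_le _ _).trans ?_
    simp only [sup_le_iff]
    refine ⟨hf, ?_⟩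
    refine (Polynomial.degree_mul_le _ _).trans ?_
    calc (Polynomial.C (f.eval ξ / Kξξ)).degree + (Kpoly φ n ξ).degree
        ≤ 0 + (n : WithBot ℕ) := by gcongr; exact Polynomial.degree_C_le; exact Kpoly_degree φ hdeg n ξ
      _ = (n : WithBot ℕ) := zero_add _
  have hwh : ((Polynomial.X - Polynomial.C w) * h).degree ≤ (n : WithBot ℕ) := by
    rw [Polynomial.degree_mul, Polynomial.degree_X_sub_C]
    rw [← Polynomial.degree_X_sub_C (R := ℂ) ξ, ← Polynomial.degree_mul, ← hh]
    exact hf'deg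
  have hzero := integral_root_factor hμT φ hdeg horth hw hξ hBξ hg h hwh
  rw [← hh] at hzero
  have hrepro : ∫ z, (Kpoly φ n ξ).eval z * conj (g.eval z) ∂μ = conj (g.eval ξ) := by
    have hpt : (fun z => (Kpoly φ n ξ).eval z * conj (g.eval z))
        = fun z => conj (g.eval z * conj ((Kpoly φ n ξ).eval z)) := by
      funext z
      rw [map_mul, Complex.conj_conj]
      ring
    rw [hpt, integral_conj, reproducing hμT φ horth hdeg n g hgd ξ]
  have hsplit : ∀ z, f.eval z * conj (g.eval z)
      = f'.eval z * conj (g.eval z)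
        + (f.eval ξ / Kξξ) * ((Kpoly φ n ξ).eval z * conj (g.eval z)) := by
    intro z
    simp only [hf'd, Polynomial.eval_sub, Polynomial.eval_mul, Polynomial.eval_C]
    ring
  calc ∫ z, f.eval z * conj (g.eval z) ∂μ
      = ∫ z, (f'.eval z * conj (g.eval z)
          + (f.eval ξ / Kξξ) * ((Kpoly φ n ξ).eval z * conj (g.eval z))) ∂μ := by
        simp only [hsplit]
    _ = (∫ z, f'.eval z * conj (g.eval z) ∂μ)
          + (f.eval ξ / Kξξ) * ∫ z, (Kpoly φ n ξ).eval z * conj (g.eval z) ∂μ := by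
        rw [integral_add (integrable_PQ hμT f' g)
          ((integrable_PQ hμT (Kpoly φ n ξ) g).const_mul _), integral_const_mul]
    _ = f.eval ξ * conj (g.eval ξ) / Kξξ := by
        rw [hzero, hrepro, zero_add]
        field_simp
end Key

lemma poly_zero_of_integral_zero {μ : Measure ℂ} [IsFiniteMeasure μ]
    (hμT : μ (Metric.sphere (0 : ℂ) 1)ᶜ = 0)
    (hμinf : ∀ s : Finset ℂ, μ ((s : Set ℂ)ᶜ) ≠ 0)
    (g : Polynomial ℂ) (hI : ∫ z, g.eval z * conj (g.eval z) ∂μ = 0) : g = 0 := by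
  by_contra hg0
  have hint : Integrable (fun z => Complex.normSq (g.eval z)) μ := by
    have := (integrable_PQ hμT g g).re
    refine this.congr ?_
    filter_upwards with z
    rw [Complex.mul_conj]
    norm_num
  have hval : ∫ z, Complex.normSq (g.eval z) ∂μ = 0 := by
    have h1 : ∫ z, ((Complex.normSq (g.eval z) : ℝ) : ℂ) ∂μ = 0 := by
      rw [← hI]
      congr 1
      funext z
      rw [Complex.mul_conj]
    have h2 : ∫ z, ((Complex.normSq (g.eval z) : ℝ) : ℂ) ∂μ
        = ((∫ z, Complex.normSq (g.eval z) ∂μ : ℝ) : ℂ) := integral_ofReal (𝕜 := ℂ)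
    rw [h2] at h1
    exact_mod_cast h1
  have hae : (fun z => Complex.normSq (g.eval z)) =ᵐ[μ] 0 :=
    (integral_eq_zero_iff_of_nonneg (fun z => Complex.normSq_nonneg _) hint).mp hval
  have hnull : μ {z | g.eval z ≠ 0} = 0 := by
    have := MeasureTheory.ae_iff.mp hae
    convert this using 2
    ext z
    simp [Complex.normSq_eq_zero]
  have hsub : ((g.roots.toFinset : Set ℂ))ᶜ ⊆ {z | g.eval z ≠ 0} := by
    intro z hz
    intro he
    apply hz
    simp only [Finset.coe_sort_coe, Finset.mem_coe, Multiset.mem_toFinset]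
    rw [Polynomial.mem_roots hg0]
    exact he
  exact hμinf g.roots.toFinset (measure_mono_null hsub hnull)

lemma K_offdiag {μ : Measure ℂ} [IsFiniteMeasure μ]
    (hμT : μ (Metric.sphere (0 : ℂ) 1)ᶜ = 0)
    (hμinf : ∀ s : Finset ℂ, μ ((s : Set ℂ)ᶜ) ≠ 0)
    (φ : ℕ → Polynomial ℂ)
    (hdeg : ∀ k, (φ k).degree = (k : ℕ))
    (horth : ∀ k m, ∫ z, (φ k).eval z * conj ((φ m).eval z) ∂μ = if k = m then 1 else 0)
    (n : ℕ) (w : ℂ) (hw : ‖w‖ = 1) (ξ ζ : ℂ) (hξ : ‖ξ‖ = 1) (hζ : ‖ζ‖ = 1)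
    (hξζ : ζ ≠ ξ) (hBξ : paraOrtho φ n w ξ = 0) (hBζ : paraOrtho φ n w ζ = 0) :
    christoffelK φ n ζ ξ = 0 := by
  -- the quotient g
  have hroot : (Bpoly φ n w).IsRoot ξ := by rw [Polynomial.IsRoot, Bpoly_eval]; exact hBξ
  obtain ⟨g, hg⟩ := Polynomial.dvd_iff_isRoot.mpr hroot
  rw [eq_comm] at hg
  -- B ≠ 0
  have hBne : Bpoly φ n w ≠ 0 := by
    rw [Bpoly]
    apply mul_ne_zero
    · intro h
      have : (1 - Polynomial.C (conj w) * Polynomial.X).coeff 0 = 0 := by rw [h]; simp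
      simp at this
    · intro h
      have h2 : christoffelK φ n w w = 0 := by rw [← Kpoly_eval, h]; simp
      rw [K_diag_real] at h2
      exact_mod_cast (K_diag_pos φ hdeg n w).ne' (by exact_mod_cast h2)
  have hgne : g ≠ 0 := by
    intro h
    rw [h, mul_zero] at hg
    exact hBne hg.symm
  -- degree of g
  have hgd : g.degree ≤ (n : WithBot ℕ) := by
    have hBd : (Bpoly φ n w).degree ≤ ((n : ℕ) + 1 : ℕ) := by
      rw [Bpoly]
      refine (Polynomial.degree_mul_le _ _).trans ?_
      have h1 : (1 - Polynomial.C (conj w) * Polynomial.X).degree ≤ 1 := by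
        refine (Polynomial.degree_sub_le _ _).trans ?_
        simp only [sup_le_iff]
        constructor
        · exact le_trans Polynomial.degree_one_le (by norm_num)
        · refine (Polynomial.degree_mul_le _ _).trans ?_
          calc (Polynomial.C (conj w)).degree + Polynomial.X.degree
              ≤ 0 + 1 := by gcongr; exact Polynomial.degree_C_le; exact Polynomial.degree_X_le
            _ = 1 := zero_add _
      calc (1 - Polynomial.C (conj w) * Polynomial.X).degree + (Kpoly φ n w).degree
          ≤ 1 + (n : WithBot ℕ) := add_le_add h1 (Kpoly_degree φ hdeg n w)
        _ = ((n : ℕ) + 1 : ℕ) := by push_cast; ring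
    have := hg ▸ hBd
    rw [Polynomial.degree_mul, Polynomial.degree_X_sub_C] at this
    have hgd' := Polynomial.degree_eq_natDegree hgne
    rw [hgd'] at this ⊢
    rw [show (1 : WithBot ℕ) + (g.natDegree : WithBot ℕ) = ((g.natDegree + 1 : ℕ) : WithBot ℕ) by push_cast; ring] at this
    exact_mod_cast by exact_mod_cast Nat.lt_succ_iff.mp (Nat.lt_succ_iff.mp (by exact_mod_cast Nat.lt_succ_of_le (by exact_mod_cast this)))
  -- g(ζ) = 0
  have hgζ : g.eval ζ = 0 := by
    have : (ζ - ξ) * g.eval ζ = paraOrtho φ n w ζ := by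
      rw [← Bpoly_eval, ← hg]
      simp
    rw [hBζ] at this
    rcases mul_eq_zero.mp this with h | h
    · exact absurd (sub_eq_zero.mp h) hξζ
    · exact h
  -- g(ξ) ≠ 0
  have hgξ : g.eval ξ ≠ 0 := by
    intro h
    have := integral_conj_g hμT φ hdeg horth hw hξ hBξ hg hgd g hgd
    rw [h, map_zero, mul_zero, zero_div] at this
    exact hgne (poly_zero_of_integral_zero hμT hμinf g this)
  -- conclude
  have h1 : ∫ z, (Kpoly φ n ζ).eval z * conj (g.eval z) ∂μ = 0 := by
    have hpt : (fun z => (Kpoly φ n ζ).eval z * conj (g.eval z))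
        = fun z => conj (g.eval z * conj ((Kpoly φ n ζ).eval z)) := by
      funext z; rw [map_mul, Complex.conj_conj]; ring
    rw [hpt, integral_conj, reproducing hμT φ horth hdeg n g hgd ζ, hgζ, map_zero]
  have h2 := integral_conj_g hμT φ hdeg horth hw hξ hBξ hg hgd
    (Kpoly φ n ζ) (Kpoly_degree φ hdeg n ζ)
  rw [h1, Kpoly_eval] at h2
  have hKne : christoffelK φ n ξ ξ ≠ 0 := by
    rw [K_diag_real]
    exact_mod_cast (K_diag_pos φ hdeg n ξ).ne'
  rcases div_eq_zero_iff.mp h2.symm with h3 | h3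
  · rcases mul_eq_zero.mp h3 with h | h
    · exact h
    · exact absurd h (by simpa using hgξ)
  · exact absurd h3 hKne

lemma K_diag_re_coe (φ : ℕ → Polynomial ℂ) (n : ℕ) (a : ℂ) :
    (((christoffelK φ n a a).re : ℝ) : ℂ) = christoffelK φ n a a := by
  rw [K_diag_real]
  norm_num

lemma K_diag_re_pos (φ : ℕ → Polynomial ℂ) (hdeg : ∀ k, (φ k).degree = (k : ℕ))
    (n : ℕ) (a : ℂ) : 0 < (christoffelK φ n a a).re := by
  rw [K_diag_real]
  simpa using K_diag_pos φ hdeg n a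

lemma dual_orth {μ : Measure ℂ} [IsFiniteMeasure μ]
    (hμT : μ (Metric.sphere (0 : ℂ) 1)ᶜ = 0)
    (hμinf : ∀ s : Finset ℂ, μ ((s : Set ℂ)ᶜ) ≠ 0)
    (φ : ℕ → Polynomial ℂ)
    (hdeg : ∀ k, (φ k).degree = (k : ℕ))
    (horth : ∀ k m, ∫ z, (φ k).eval z * conj ((φ m).eval z) ∂μ = if k = m then 1 else 0)
    (n : ℕ) (w : ℂ) (hw : ‖w‖ = 1)
    (ζ : Fin (n + 1) → ℂ) (hζT : ∀ j, ‖ζ j‖ = 1)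
    (hζinj : Function.Injective ζ) (hζ0 : ∀ j, paraOrtho φ n w (ζ j) = 0)
    (k m : Fin (n + 1)) :
    ∑ j : Fin (n + 1), (((christoffelK φ n (ζ j) (ζ j)).re : ℝ) : ℂ)⁻¹
        * ((φ (k : ℕ)).eval (ζ j) * conj ((φ (m : ℕ)).eval (ζ j)))
      = if k = m then 1 else 0 := by
  set Kr : Fin (n + 1) → ℝ := fun j => (christoffelK φ n (ζ j) (ζ j)).re with hKr
  have hKrpos : ∀ j, 0 < Kr j := fun j => K_diag_re_pos φ hdeg n (ζ j)
  have hs : ∀ j, ((Real.sqrt (Kr j) : ℝ) : ℂ)⁻¹ * ((Real.sqrt (Kr j) : ℝ) : ℂ)⁻¹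
      = (((Kr j : ℝ)) : ℂ)⁻¹ := by
    intro j
    have hr : (Real.sqrt (Kr j))⁻¹ * (Real.sqrt (Kr j))⁻¹ = (Kr j)⁻¹ := by
      rw [← mul_inv, Real.mul_self_sqrt (hKrpos j).le]
    calc ((Real.sqrt (Kr j) : ℝ) : ℂ)⁻¹ * ((Real.sqrt (Kr j) : ℝ) : ℂ)⁻¹
        = (((Real.sqrt (Kr j))⁻¹ * (Real.sqrt (Kr j))⁻¹ : ℝ) : ℂ) := by push_cast; ring
      _ = (((Kr j)⁻¹ : ℝ) : ℂ) := by rw [hr]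
      _ = (((Kr j) : ℝ) : ℂ)⁻¹ := by push_cast; ring
  set U : Matrix (Fin (n + 1)) (Fin (n + 1)) ℂ :=
    fun j k => ((Real.sqrt (Kr j) : ℝ) : ℂ)⁻¹ * (φ (k : ℕ)).eval (ζ j) with hU
  have hUU : U * U.conjTranspose = 1 := by
    ext i j
    rw [Matrix.mul_apply]
    have hterm : ∀ x : Fin (n + 1), U i x * U.conjTranspose x j
        = (((Real.sqrt (Kr i) : ℝ) : ℂ)⁻¹ * ((Real.sqrt (Kr j) : ℝ) : ℂ)⁻¹)
          * conj (conj ((φ (x : ℕ)).eval (ζ i)) * (φ (x : ℕ)).eval (ζ j)) := by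
      intro x
      rw [Matrix.conjTranspose_apply, hU]
      simp only [RCLike.star_def, map_mul, map_inv₀, Complex.conj_ofReal, Complex.conj_conj]
      ring
    rw [Finset.sum_congr rfl (fun x _ => hterm x), ← Finset.mul_sum, ← map_sum]
    have hsum : ∑ x : Fin (n + 1), conj ((φ (x : ℕ)).eval (ζ i)) * (φ (x : ℕ)).eval (ζ j)
        = christoffelK φ n (ζ i) (ζ j) := by
      rw [christoffelK]
      exact Fin.sum_univ_eq_sum_range (fun x => conj ((φ x).eval (ζ i)) * (φ x).eval (ζ j)) (n+1)
    rw [hsum]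
    by_cases hij : i = j
    · subst hij
      rw [Matrix.one_apply_eq, hs i, ← K_diag_re_coe φ n (ζ i), Complex.conj_ofReal]
      rw [← Complex.ofReal_inv, ← Complex.ofReal_mul, inv_mul_cancel₀ (hKrpos i).ne']
      norm_num
    · rw [K_offdiag hμT hμinf φ hdeg horth n w hw (ζ j) (ζ i) (hζT j) (hζT i)
        (fun h => hij (hζinj h)) (hζ0 j) (hζ0 i), map_zero, mul_zero,
        Matrix.one_apply_ne hij]
  have hUU' : U.conjTranspose * U = 1 := mul_eq_one_comm.mp hUU
  calc ∑ j : Fin (n + 1), (((christoffelK φ n (ζ j) (ζ j)).re : ℝ) : ℂ)⁻¹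
        * ((φ (k : ℕ)).eval (ζ j) * conj ((φ (m : ℕ)).eval (ζ j)))
      = ∑ j : Fin (n + 1), U.conjTranspose m j * U j k := by
        refine Finset.sum_congr rfl fun j _ => ?_
        rw [Matrix.conjTranspose_apply, hU]
        simp only [RCLike.star_def, map_mul, map_inv₀, Complex.conj_ofReal]
        rw [← hs j]
        ring
    _ = (U.conjTranspose * U) m k := (Matrix.mul_apply).symm
    _ = (1 : Matrix (Fin (n+1)) (Fin (n+1)) ℂ) m k := by rw [hUU']
    _ = if k = m then 1 else 0 := by
        rw [Matrix.one_apply]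
        by_cases h : k = m
        · simp [h]
        · rw [if_neg (fun hh => h hh.symm), if_neg h]

/-- **Quadrature identity.** For all polynomials `p, q` of degree at most `n`,
`∫ p conj(q) dμ_n = ∫ p conj(q) dμ`, where `μ_n` is the discrete measure supported on the
zeros `ζ_{0n},…,ζ_{nn} ∈ T` of the para-orthogonal polynomial `B_{n+1}(w,·)` with weights
`1/K_n(ζ_{jn},ζ_{jn})`. -/
theorem nodeMeasure_quadrature
    (μ : Measure ℂ) [IsFiniteMeasure μ]
    (hμT : μ (Metric.sphere (0 : ℂ) 1)ᶜ = 0)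
    (hμinf : ∀ s : Finset ℂ, μ ((s : Set ℂ)ᶜ) ≠ 0)
    (φ : ℕ → Polynomial ℂ)
    (hdeg : ∀ k, (φ k).degree = (k : ℕ))
    (hlead : ∀ k, 0 < ((φ k).leadingCoeff).re ∧ ((φ k).leadingCoeff).im = 0)
    (horth : ∀ k m, ∫ z, (φ k).eval z * conj ((φ m).eval z) ∂μ
        = if k = m then 1 else 0)
    (n : ℕ) (w : ℂ) (hw : w ∈ Metric.sphere (0 : ℂ) 1)
    (ζ : Fin (n + 1) → ℂ)
    (hζT : ∀ j, ζ j ∈ Metric.sphere (0 : ℂ) 1)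
    (hζinj : Function.Injective ζ)
    (hζ0 : ∀ j, paraOrtho φ n w (ζ j) = 0)
    (p q : Polynomial ℂ) (hp : p.degree ≤ n) (hq : q.degree ≤ n) :
    ∫ z, p.eval z * conj (q.eval z) ∂(nodeMeasure φ n ζ)
      = ∫ z, p.eval z * conj (q.eval z) ∂μ := by
  have hwn : ‖w‖ = 1 := by rwa [mem_sphere_zero_iff_norm] at hw
  have hζn : ∀ j, ‖ζ j‖ = 1 := fun j => by
    have := hζT j; rwa [mem_sphere_zero_iff_norm] at this
  obtain ⟨a, ha⟩ := exists_expansion φ hdeg n p hp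
  obtain ⟨b, hb⟩ := exists_expansion φ hdeg n q hq
  -- RHS value
  have hRHS : ∫ z, p.eval z * conj (q.eval z) ∂μ
      = ∑ m ∈ Finset.range (n + 1), conj (b m) * a m := by
    have hpt : ∀ z, p.eval z * conj (q.eval z)
        = ∑ m ∈ Finset.range (n + 1), conj (b m) * (p.eval z * conj ((φ m).eval z)) := by
      intro z
      conv_lhs => rw [hb]
      rw [eval_finset_sum, map_sum, Finset.mul_sum]
      refine Finset.sum_congr rfl fun m _ => ?_
      rw [Polynomial.eval_mul, Polynomial.eval_C, map_mul]
      ring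
    calc ∫ z, p.eval z * conj (q.eval z) ∂μ
        = ∑ m ∈ Finset.range (n + 1), ∫ z, conj (b m) * (p.eval z * conj ((φ m).eval z)) ∂μ := by
          simp only [hpt]
          exact integral_finset_sum _ (fun m _ => (integrable_PQ hμT p (φ m)).const_mul _)
      _ = ∑ m ∈ Finset.range (n + 1), conj (b m) * a m := by
          refine Finset.sum_congr rfl fun m hm => ?_
          rw [integral_const_mul, integral_f_conj_phi hμT φ horth n a p ha m hm]
  -- LHS via diracs
  have hmeas : Measurable fun z => p.eval z * conj (q.eval z) := by
    have : Continuous fun z : ℂ => p.eval z * conj (q.eval z) := by continuity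
    exact this.measurable
  have hLHS1 : ∫ z, p.eval z * conj (q.eval z) ∂(nodeMeasure φ n ζ)
      = ∑ j : Fin (n + 1), (((christoffelK φ n (ζ j) (ζ j)).re : ℝ) : ℂ)⁻¹
          * (p.eval (ζ j) * conj (q.eval (ζ j))) := by
    rw [nodeMeasure, integral_finset_sum_measure (fun j _ =>
      (integrable_dirac'' hmeas (ζ j)).smul_measure ENNReal.ofReal_ne_top)]
    refine Finset.sum_congr rfl fun j _ => ?_
    rw [integral_smul_measure, integral_dirac,
      ENNReal.toReal_ofReal (inv_nonneg.mpr (K_diag_re_pos φ hdeg n (ζ j)).le)]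
    rw [Complex.real_smul, Complex.ofReal_inv]
  rw [hLHS1, hRHS]
  -- expand evals at nodes
  have hpe : ∀ j, p.eval (ζ j)
      = ∑ k ∈ Finset.range (n + 1), a k * (φ k).eval (ζ j) := by
    intro j
    conv_lhs => rw [ha]
    rw [eval_finset_sum]
    exact Finset.sum_congr rfl fun k _ => by rw [Polynomial.eval_mul, Polynomial.eval_C]
  have hqe : ∀ j, conj (q.eval (ζ j))
      = ∑ m ∈ Finset.range (n + 1), conj (b m) * conj ((φ m).eval (ζ j)) := by
    intro j
    conv_lhs => rw [hb]
    rw [eval_finset_sum, map_sum]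
    exact Finset.sum_congr rfl fun m _ => by
      rw [Polynomial.eval_mul, Polynomial.eval_C, map_mul]
  calc ∑ j : Fin (n + 1), (((christoffelK φ n (ζ j) (ζ j)).re : ℝ) : ℂ)⁻¹
          * (p.eval (ζ j) * conj (q.eval (ζ j)))
      = ∑ j : Fin (n + 1), ∑ k ∈ Finset.range (n + 1), ∑ m ∈ Finset.range (n + 1),
          (a k * conj (b m)) * ((((christoffelK φ n (ζ j) (ζ j)).re : ℝ) : ℂ)⁻¹
            * ((φ k).eval (ζ j) * conj ((φ m).eval (ζ j)))) := by
        refine Finset.sum_congr rfl fun j _ => ?_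
        rw [hpe j, hqe j, Finset.sum_mul_sum, Finset.mul_sum]
        refine Finset.sum_congr rfl fun k _ => ?_
        rw [Finset.mul_sum]
        refine Finset.sum_congr rfl fun m _ => ?_
        ring
    _ = ∑ k ∈ Finset.range (n + 1), ∑ m ∈ Finset.range (n + 1),
          (a k * conj (b m)) * ∑ j : Fin (n + 1),
            (((christoffelK φ n (ζ j) (ζ j)).re : ℝ) : ℂ)⁻¹
            * ((φ k).eval (ζ j) * conj ((φ m).eval (ζ j))) := by
        rw [Finset.sum_comm]
        refine Finset.sum_congr rfl fun k _ => ?_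
        rw [Finset.sum_comm]
        refine Finset.sum_congr rfl fun m _ => ?_
        rw [← Finset.mul_sum]
    _ = ∑ k ∈ Finset.range (n + 1), ∑ m ∈ Finset.range (n + 1),
          (a k * conj (b m)) * (if k = m then 1 else 0) := by
        refine Finset.sum_congr rfl fun k hk => Finset.sum_congr rfl fun m hm => ?_
        congr 1
        have := dual_orth hμT hμinf φ hdeg horth n w hwn ζ hζn hζinj hζ0
          ⟨k, Finset.mem_range.mp hk⟩ ⟨m, Finset.mem_range.mp hm⟩
        simpa [Fin.mk.injEq] using this
    _ = ∑ m ∈ Finset.range (n + 1), conj (b m) * a m := by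
        refine Finset.sum_congr rfl fun k hk => ?_
        rw [Finset.sum_congr rfl (fun m (_ : m ∈ Finset.range (n+1)) => by
          rw [mul_ite, mul_one, mul_zero])]
        rw [Finset.sum_ite_eq (Finset.range (n + 1)) k (fun m => a k * conj (b m)),
          if_pos hk]
        ring
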